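/- Let β' and β be consecutive elements of Φ ∪ {0} with β' < β, write β = p/n in lowest terms, let d : J → ℕ be any function, and let p₀ ≥ 1 be an integer. Define e(p₀, γ) = (1/2)·∑_{v∈J} d(v)·((p₀−1)v + ⌊γv⌋)·((p₀−1)v + ⌊γv⌋ + 1) for γ ∈ Φ ∪ {0}. Then e(p₀, β) = e(p₀, β') + ∑_{v∈J, n∣v} ((p₀−1)v + βv)·d(v), where for n ∣ v the number βv = pv/n is an integer. -/

import Mathlib

/-- the recursion for `e(p₀, γ)` between consecutive elements
`β' < β` of `Φ ∪ {0}`, where `β = p/n` in lowest terms: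
`e(p₀, β) = e(p₀, β') + ∑_{v ∈ J, n ∣ v} ((p₀-1)v + βv)·d(v)`,
and for `n ∣ v` the number `βv` is an integer. -/
theorem stmt_3 (J : Finset ℕ) (hJne : J.Nonempty) (hJpos : ∀ v ∈ J, 0 < v)
    (Φ : Set ℚ)
    (hΦ : Φ = {β : ℚ | 0 < β ∧ β ≤ 1 ∧ ∃ v ∈ J, ∃ m : ℤ, (v : ℚ) * β = m})
    (β' β : ℚ) (hβ' : β' ∈ Φ ∪ {0}) (hβ : β ∈ Φ ∪ {0}) (hlt : β' < β)
    (hcons : ∀ γ ∈ Φ, ¬(β' < γ ∧ γ < β))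
    (p n : ℕ) (hp : 0 < p) (hn : 0 < n) (hcop : Nat.Coprime p n)
    (hβpn : β = (p : ℚ) / (n : ℚ))
    (d : ℕ → ℕ) (p₀ : ℕ) (hp₀ : 1 ≤ p₀)
    (e : ℚ → ℚ)
    (he : ∀ γ : ℚ, e γ = (1/2 : ℚ) * ∑ v ∈ J, (d v : ℚ) *
        (((p₀ : ℚ) - 1) * (v : ℚ) + (⌊γ * (v : ℚ)⌋ : ℚ)) *
        (((p₀ : ℚ) - 1) * (v : ℚ) + (⌊γ * (v : ℚ)⌋ : ℚ) + 1)) :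
    e β = e β' + ∑ v ∈ J.filter (fun v => n ∣ v),
        (((p₀ : ℚ) - 1) * (v : ℚ) + β * (v : ℚ)) * (d v : ℚ) ∧
    ∀ v ∈ J, n ∣ v → ∃ m : ℤ, β * (v : ℚ) = (m : ℚ) := by
  have hn0 : (n : ℚ) ≠ 0 := by positivity
  have hβ'0 : 0 ≤ β' := by
    rcases hβ' with h | h
    · rw [hΦ] at h; exact h.1.le
    · simp only [Set.mem_singleton_iff] at h; simp [h]
  have hβpos : 0 < β := lt_of_le_of_lt hβ'0 hlt
  have hβ1 : β ≤ 1 := by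
    rcases hβ with h | h
    · rw [hΦ] at h; exact h.2.1
    · simp only [Set.mem_singleton_iff] at h; exact absurd h hβpos.ne'
  -- integrality for n ∣ v
  have hint : ∀ v ∈ J, n ∣ v → ∃ m : ℤ, β * (v : ℚ) = (m : ℚ) := by
    rintro v hv ⟨k, rfl⟩
    refine ⟨(p : ℤ) * k, ?_⟩
    rw [hβpn]
    push_cast
    field_simp
  -- the key floor relation
  have hfloor : ∀ v ∈ J, ⌊β' * (v : ℚ)⌋ = ⌊β * (v : ℚ)⌋ - (if n ∣ v then 1 else 0) := by
    intro v hv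
    have hv0 : (0 : ℚ) < v := by exact_mod_cast hJpos v hv
    by_cases hdvd : n ∣ v
    · obtain ⟨m, hm⟩ := hint v hv hdvd
      have hfm : ⌊β * (v : ℚ)⌋ = m := by rw [hm]; exact Int.floor_intCast m
      simp only [hdvd, if_true, hfm]
      have hmpos : (0 : ℚ) < m := by rw [← hm]; positivity
      have hle : ⌊β' * (v : ℚ)⌋ ≤ m - 1 := by
        have : ⌊β' * (v : ℚ)⌋ < m := Int.floor_lt.mpr (by
          rw [← hm]; exact mul_lt_mul_of_pos_right hlt hv0)
        omega
      refine le_antisymm hle (le_of_not_gt fun hcon => ?_)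
      have h1 : β' * v < ((m - 1 : ℤ) : ℚ) := by
        have h2 := Int.lt_floor_add_one (β' * (v : ℚ))
        have h3 : ((⌊β' * (v : ℚ)⌋ : ℚ) + 1) ≤ ((m - 1 : ℤ) : ℚ) := by
          exact_mod_cast (by omega : ⌊β' * (v : ℚ)⌋ + 1 ≤ m - 1)
        linarith
      have hm1pos : (0 : ℚ) < ((m - 1 : ℤ) : ℚ) := by
        have : (0 : ℚ) ≤ β' * v := by positivity
        linarith
      set γ : ℚ := ((m - 1 : ℤ) : ℚ) / v with hγ
      have hγβ : γ < β := by
        rw [div_lt_iff₀ hv0, hm]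
        push_cast
        linarith
      have hγΦ : γ ∈ Φ := by
        rw [hΦ]
        refine ⟨by positivity, hγβ.le.trans hβ1, v, hv, m - 1, ?_⟩
        rw [hγ]; field_simp [hv0.ne']
      exact hcons γ hγΦ ⟨(lt_div_iff₀ hv0).mpr h1, hγβ⟩
    · simp only [hdvd, if_false, sub_zero]
      have hle : ⌊β' * (v : ℚ)⌋ ≤ ⌊β * (v : ℚ)⌋ :=
        Int.floor_le_floor (mul_le_mul_of_nonneg_right hlt.le hv0.le)
      refine le_antisymm hle ?_
      by_contra hcon
      push_neg at hcon
      set k : ℤ := ⌊β * (v : ℚ)⌋ with hk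
      have hkne : (k : ℚ) ≠ β * v := by
        intro hkeq
        apply hdvd
        have hpv : (p : ℚ) * v = k * n := by
          rw [hβpn] at hkeq
          field_simp at hkeq
          linarith [hkeq]
        have hpvz : (p : ℤ) * v = k * n := by exact_mod_cast hpv
        have hdZ : (n : ℤ) ∣ (p : ℤ) * v := ⟨k, by linarith⟩
        have hc : IsCoprime (n : ℤ) (p : ℤ) :=
          Int.isCoprime_iff_gcd_eq_one.mpr (by simpa using hcop.symm)
        have hnd : (n : ℤ) ∣ (v : ℤ) := hc.dvd_of_dvd_mul_left hdZ
        exact_mod_cast hnd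
      have hklt : (k : ℚ) < β * v := lt_of_le_of_ne (Int.floor_le _) hkne
      have hkgt : β' * v < (k : ℚ) := by
        calc β' * v < (⌊β' * (v : ℚ)⌋ : ℚ) + 1 := Int.lt_floor_add_one _
          _ ≤ (k : ℚ) := by exact_mod_cast (by omega : ⌊β' * (v:ℚ)⌋ + 1 ≤ k)
      have hkpos : (0 : ℚ) < (k : ℚ) := lt_of_le_of_lt (by positivity) hkgt
      set γ : ℚ := (k : ℚ) / v with hγ
      have hγβ : γ < β := (div_lt_iff₀ hv0).mpr (by linarith)
      have hγΦ : γ ∈ Φ := by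
        rw [hΦ]
        refine ⟨by positivity, hγβ.le.trans hβ1, v, hv, k, ?_⟩
        rw [hγ]; field_simp [hv0.ne']
      exact hcons γ hγΦ ⟨(lt_div_iff₀ hv0).mpr hkgt, hγβ⟩
  refine ⟨?_, hint⟩
  rw [he β, he β', Finset.mul_sum, Finset.mul_sum, Finset.sum_filter,
    ← Finset.sum_add_distrib]
  refine Finset.sum_congr rfl fun v hv => ?_
  have hf := hfloor v hv
  by_cases hdvd : n ∣ v
  · obtain ⟨m, hm⟩ := hint v hv hdvd
    have hfm : ⌊β * (v : ℚ)⌋ = m := by rw [hm]; exact Int.floor_intCast m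
    rw [hf, hfm, hm]
    simp only [hdvd, if_true]
    push_cast
    ring
  · rw [hf]
    simp only [hdvd, if_false]
    push_cast
    ring
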